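/- Let G be a topological group acting continuously by affine isometries on a real Hilbert space X, i.e. g·x = π(g)x + b(g) where π is an orthogonal representation of G on X and b : G → X is the associated cocycle. Then the action is weakly evanescent if and only if π almost has nonzero invariant vectors, i.e. for every compact subset Q ⊆ G and every ε > 0 there is a unit vector v ∈ X with sup_{g ∈ Q} ‖π(g)v − v‖ ≤ ε. -/

import Mathlib

/-- A map `σ : ℝ → X` is a geodesic (isometric) on the interval `[a, b]`. -/
def IsGeodesicOn {X : Type*} [MetricSpace X] (σ : ℝ → X) (a b : ℝ) : Prop :=
  ∀ s ∈ Set.Icc a b, ∀ t ∈ Set.Icc a b, dist (σ s) (σ t) = |s - t|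

/-- A geodesic metric space: any two points are joined by a geodesic segment. -/
def IsGeodesicSpace (X : Type*) [MetricSpace X] : Prop :=
  ∀ x y : X, ∃ σ : ℝ → X, IsGeodesicOn σ 0 (dist x y) ∧ σ 0 = x ∧ σ (dist x y) = y

/-- A CAT(0) space: a geodesic space satisfying the CN inequality of Bruhat–Tits
for all (metric) midpoints. -/
def IsCAT0 (X : Type*) [MetricSpace X] : Prop :=
  IsGeodesicSpace X ∧
    ∀ x c c' m : X, dist m c = dist c c' / 2 → dist m c' = dist c c' / 2 →
      2 * dist m x ^ 2 ≤ dist c' x ^ 2 + dist c x ^ 2 - dist c' c ^ 2 / 2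

/-- A subset of a metric space is (geodesically) convex if it contains every geodesic
segment joining any two of its points. -/
def GConvex {X : Type*} [MetricSpace X] (A : Set X) : Prop :=
  ∀ (σ : ℝ → X) (a b : ℝ), a ≤ b → IsGeodesicOn σ a b → σ a ∈ A → σ b ∈ A →
    ∀ t ∈ Set.Icc a b, σ t ∈ A

/-- `ρ` is an action of the group `G` on `X` by isometries. -/
def IsIsometricAction {G X : Type*} [Group G] [MetricSpace X] (ρ : G → X → X) : Prop :=
  (∀ x, ρ 1 x = x) ∧ (∀ g h x, ρ (g * h) x = ρ g (ρ h x)) ∧ ∀ g : G, Isometry (ρ g)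

/-- A subset `T ⊆ X` is `Q`-evanescent: the set of displacements `d(g x, x)`,
`g ∈ Q`, `x ∈ T`, is bounded. -/
def QEvanescent {G X : Type*} [MetricSpace X] (ρ : G → X → X) (Q : Set G) (T : Set X) : Prop :=
  ∃ C : ℝ, ∀ g ∈ Q, ∀ x ∈ T, dist (ρ g x) x ≤ C

/-- The action is evanescent: there is an unbounded set which is `Q`-evanescent
for every compact `Q ⊆ G`. -/
def Evanescent {G X : Type*} [TopologicalSpace G] [MetricSpace X] (ρ : G → X → X) : Prop :=
  ∃ T : Set X, ¬ Bornology.IsBounded T ∧ ∀ Q : Set G, IsCompact Q → QEvanescent ρ Q T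

/-- The action is weakly evanescent: for every compact `Q ⊆ G` there is an unbounded
`Q`-evanescent set. -/
def WeaklyEvanescent {G X : Type*} [TopologicalSpace G] [MetricSpace X] (ρ : G → X → X) : Prop :=
  ∀ Q : Set G, IsCompact Q → ∃ T : Set X, ¬ Bornology.IsBounded T ∧ QEvanescent ρ Q T

/-- Monod, Proposition: a continuous affine isometric action `g · x = π(g)x + b(g)` of a
topological group `G` on a real Hilbert space `X` is weakly evanescent if and only if the
orthogonal representation `π` almost has nonzero invariant vectors. -/
theorem weaklyEvanescent_iff_almost_invariant_vectors
    {G : Type*} [Group G] [TopologicalSpace G] [IsTopologicalGroup G]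
    {X : Type*} [NormedAddCommGroup X] [InnerProductSpace ℝ X] [CompleteSpace X]
    (π : G →* (X ≃ₗᵢ[ℝ] X)) (b : G → X)
    (hπcont : ∀ v : X, Continuous fun g : G => π g v)
    (hcocycle : ∀ g h : G, b (g * h) = π g (b h) + b g)
    (hcont : Continuous fun p : G × X => π p.1 p.2 + b p.1) :
    WeaklyEvanescent (fun (g : G) (x : X) => π g x + b g) ↔
      ∀ Q : Set G, IsCompact Q → ∀ ε : ℝ, 0 < ε →
        ∃ v : X, ‖v‖ = 1 ∧ ∀ g ∈ Q, ‖π g v - v‖ ≤ ε := by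
  have hb : Continuous b := by
    have h : Continuous fun g : G => π g (0:X) + b g :=
      hcont.comp (continuous_id.prodMk continuous_const)
    simpa using h
  constructor
  · intro hWE Q hQ ε hε
    obtain ⟨T, hTub, C, hC⟩ := hWE Q hQ
    obtain ⟨B, hB⟩ := isBounded_iff_forall_norm_le.1 (hQ.image hb).isBounded
    rw [isBounded_iff_forall_norm_le] at hTub
    push_neg at hTub
    obtain ⟨x, hxT, hx⟩ := hTub (max ((C + B)/ε) 0)
    have hxpos : 0 < ‖x‖ := lt_of_le_of_lt (le_max_right _ _) hx
    refine ⟨‖x‖⁻¹ • x, ?_, ?_⟩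
    · simp [norm_smul, abs_of_nonneg, inv_mul_cancel₀ hxpos.ne']
    · intro g hg
      have h1 : ‖π g x - x‖ ≤ C + B := by
        have h2 := hC g hg x hxT
        rw [dist_eq_norm] at h2
        have h3 : ‖b g‖ ≤ B := hB (b g) ⟨g, hg, rfl⟩
        calc ‖π g x - x‖ = ‖(π g x + b g - x) + (- b g)‖ := by congr 1; abel
          _ ≤ ‖π g x + b g - x‖ + ‖b g‖ := by simpa using norm_add_le (π g x + b g - x) (- b g)
          _ ≤ C + B := add_le_add h2 h3
      have h4 : π g (‖x‖⁻¹ • x) - ‖x‖⁻¹ • x = ‖x‖⁻¹ • (π g x - x) := by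
        rw [map_smul, smul_sub]
      rw [h4, norm_smul, norm_inv, norm_norm]
      have h5 : C + B < ε * ‖x‖ :=
        by nlinarith [(div_lt_iff₀ hε).1 (lt_of_le_of_lt (le_max_left ((C+B)/ε) 0) hx)]
      rw [inv_mul_le_iff₀ hxpos]
      calc ‖π g x - x‖ ≤ C + B := h1
        _ ≤ ‖x‖ * ε := by linarith
  · intro hAI Q hQ
    obtain ⟨B, hB⟩ := isBounded_iff_forall_norm_le.1 (hQ.image hb).isBounded
    choose v hv1 hv2 using fun n : ℕ => hAI Q hQ (1/(n+1)) (by positivity)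
    refine ⟨Set.range (fun n : ℕ => (n : ℝ) • v n), ?_, 1 + B, ?_⟩
    · rw [isBounded_iff_forall_norm_le]
      push_neg
      intro C
      obtain ⟨n, hn⟩ := exists_nat_gt C
      exact ⟨(n:ℝ) • v n, ⟨n, rfl⟩, by simpa [norm_smul, hv1] using hn⟩
    · rintro g hg x ⟨n, rfl⟩
      have hv := hv2 n g hg
      have heq : π g ((n:ℝ) • v n) + b g - (n:ℝ) • v n
          = (n:ℝ) • (π g (v n) - v n) + b g := by
        rw [map_smul, smul_sub]; abel
      rw [dist_eq_norm, heq]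
      have hns : ‖(n:ℝ) • (π g (v n) - v n)‖ ≤ 1 := by
        rw [norm_smul, Real.norm_natCast]
        calc (n:ℝ) * ‖π g (v n) - v n‖ ≤ (n:ℝ) * (1/(n+1)) :=
              mul_le_mul_of_nonneg_left hv (Nat.cast_nonneg n)
          _ = (n:ℝ)/(n+1) := by ring
          _ ≤ 1 := by
              rw [div_le_one (by positivity)]
              linarith
      calc ‖(n:ℝ) • (π g (v n) - v n) + b g‖
          ≤ ‖(n:ℝ) • (π g (v n) - v n)‖ + ‖b g‖ := norm_add_le _ _
        _ ≤ 1 + B := add_le_add hns (hB (b g) ⟨g, hg, rfl⟩)
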